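/- Let A be a finite set with |A| = m ≥ 2, and let μ be a probability mass function on A × A × {0,1} × {0,1}, with coordinates written (y', y, w₀, w₁). Assume: (i) the marginal of μ on the last two coordinates is uniform, i.e., μ(w₀ = a, w₁ = b) = 1/4 for all a,b ∈ {0,1}; and (ii) μ(y ≠ y', w₀ = 1, w₁ = 0) = 0. Then the conditional entropy H(Y | Y', W₀, W₁) := −Σ_{(y',y,w₀,w₁)} μ(y',y,w₀,w₁)·log₂( μ(y',y,w₀,w₁) / μ₁(y',w₀,w₁) ) is at most (3/4)·log₂ m, where μ₁(y',w₀,w₁) = Σ_y μ(y',y,w₀,w₁) is the marginal on (y',w₀,w₁) and the convention 0·log₂(0/t) = 0 is used. -/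

import Mathlib

open Finset

lemma log_block {A : Type*} [Fintype A] (p : A → ℝ) (hp : ∀ y, 0 ≤ p y) :
    ∑ y, p y * Real.log ((∑ z, p z) / p y)
      ≤ (∑ z, p z) * Real.log (Fintype.card A) := by
  classical
  set S := ∑ z, p z with hS
  have hS0 : 0 ≤ S := Finset.sum_nonneg fun y _ => hp y
  set T : Finset A := Finset.univ.filter (fun y => p y ≠ 0) with hT
  have hsplit : ∑ y, p y * Real.log (S / p y)
      = ∑ y ∈ T, p y * Real.log (S / p y) := by
    rw [← Finset.sum_filter_add_sum_filter_not Finset.univ (fun y => p y ≠ 0)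
      (fun y => p y * Real.log (S / p y))]
    have hz : ∑ y ∈ Finset.univ.filter (fun y => ¬ p y ≠ 0),
        p y * Real.log (S / p y) = 0 := by
      apply Finset.sum_eq_zero
      intro y hy
      simp only [Finset.mem_filter, not_not] at hy
      rw [hy.2]; ring
    rw [hz, add_zero]
  have hSsplit : S = ∑ y ∈ T, p y := by
    rw [hS, ← Finset.sum_filter_add_sum_filter_not Finset.univ (fun y => p y ≠ 0) p]
    have hz : ∑ y ∈ Finset.univ.filter (fun y => ¬ p y ≠ 0), p y = 0 := by
      apply Finset.sum_eq_zero
      intro y hy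
      simp only [Finset.mem_filter, not_not] at hy
      exact hy.2
    rw [hz, add_zero]
  rcases eq_or_lt_of_le hS0 with h0 | hSpos
  · have hz : ∀ y, p y = 0 := fun y =>
      (Finset.sum_eq_zero_iff_of_nonneg (fun y _ => hp y)).1 h0.symm y (Finset.mem_univ y)
    have h1 : ∑ y, p y * Real.log (S / p y) = 0 :=
      Finset.sum_eq_zero fun y _ => by rw [hz y]; ring
    rw [h1, ← h0]
    simp
  · -- S > 0
    have hTne : T.Nonempty := by
      by_contra h
      rw [Finset.not_nonempty_iff_eq_empty] at h
      rw [hSsplit, h, Finset.sum_empty] at hSpos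
      exact lt_irrefl _ hSpos
    have hA : Nonempty A := ⟨hTne.choose⟩
    have hmpos : 0 < (Fintype.card A : ℝ) := by
      exact_mod_cast Fintype.card_pos
    set M : ℝ := (Fintype.card A : ℝ) with hM
    have hppos : ∀ y ∈ T, 0 < p y := by
      intro y hy
      simp only [hT, Finset.mem_filter] at hy
      exact lt_of_le_of_ne (hp y) (Ne.symm hy.2)
    have key : ∀ y ∈ T, p y * Real.log (S / p y)
        ≤ p y * Real.log M + (S / M - p y) := by
      intro y hy
      have hpy := hppos y hy
      have harg : S / p y = M * (S / (M * p y)) := by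
        field_simp
      rw [harg, Real.log_mul (ne_of_gt hmpos) (by positivity), mul_add]
      have hlog : Real.log (S / (M * p y)) ≤ S / (M * p y) - 1 :=
        Real.log_le_sub_one_of_pos (by positivity)
      have h2 : p y * Real.log (S / (M * p y)) ≤ p y * (S / (M * p y) - 1) :=
        mul_le_mul_of_nonneg_left hlog (le_of_lt hpy)
      have h3 : p y * (S / (M * p y) - 1) = S / M - p y := by
        field_simp
      linarith [h2, h3 ▸ h2]
    calc ∑ y, p y * Real.log (S / p y)
        = ∑ y ∈ T, p y * Real.log (S / p y) := hsplit
      _ ≤ ∑ y ∈ T, (p y * Real.log M + (S / M - p y)) :=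
          Finset.sum_le_sum key
      _ = (∑ y ∈ T, p y) * Real.log M + ((T.card : ℝ) * (S / M) - ∑ y ∈ T, p y) := by
          rw [Finset.sum_add_distrib, Finset.sum_sub_distrib, Finset.sum_mul,
            Finset.sum_const, nsmul_eq_mul]
      _ ≤ S * Real.log M + 0 := by
          rw [← hSsplit]
          have hcardle : (T.card : ℝ) ≤ M := by
            rw [hM]
            exact_mod_cast Finset.card_le_card (Finset.subset_univ T)
          have : (T.card : ℝ) * (S / M) ≤ M * (S / M) :=
            mul_le_mul_of_nonneg_right hcardle (by positivity)
          have hMS : M * (S / M) = S := by field_simp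
          nlinarith
      _ = S * Real.log M := by ring


/-- entropy step in the converse of Theorem 6 of the paper: let `A` be
a finite set with `|A| = m ≥ 2` and `μ` a probability mass function on
`A × A × {0,1} × {0,1}` with coordinates `(y', y, w₀, w₁)` such that (i) the marginal
of `μ` on `(w₀, w₁)` is uniform, and (ii) `μ(y ≠ y', w₀ = 1, w₁ = 0) = 0`. Then the
conditional entropy
`H(Y|Y',W₀,W₁) = -Σ_t μ(t)·log₂(μ(t)/μ₁(y',w₀,w₁))` is at most `(3/4)·log₂ m`,
where `μ₁(y',w₀,w₁) = Σ_y μ(y',y,w₀,w₁)` (convention `0·log₂(0/t) = 0`, automatic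
since `Real.log 0 = 0`). -/
theorem cond_entropy_le (A : Type*) [Fintype A] [DecidableEq A] (m : ℕ) (hm : 2 ≤ m)
    (hcard : Fintype.card A = m)
    (μ : A × A × Bool × Bool → ℝ)
    (hnn : ∀ t, 0 ≤ μ t)
    (hsum : ∑ t : A × A × Bool × Bool, μ t = 1)
    (hunif : ∀ a b : Bool, ∑ y' : A, ∑ y : A, μ (y', y, a, b) = 1 / 4)
    (hrep : ∑ y' : A, ∑ y : A, (if y ≠ y' then μ (y', y, true, false) else 0) = 0) :
    -(∑ t : A × A × Bool × Bool,
        μ t * Real.logb 2 (μ t / ∑ y : A, μ (t.1, y, t.2.2.1, t.2.2.2)))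
      ≤ 3 / 4 * Real.logb 2 m := by
  classical
  have hlog2 : 0 < Real.log 2 := Real.log_pos one_lt_two
  -- from hrep: off-diagonal terms of the (true,false) block vanish
  have hzero : ∀ y' y : A, y ≠ y' → μ (y', y, true, false) = 0 := by
    intro y' y hne
    have hnn1 : ∀ y' ∈ (Finset.univ : Finset A),
        (0:ℝ) ≤ ∑ y : A, (if y ≠ y' then μ (y', y, true, false) else 0) := by
      intro z _
      apply Finset.sum_nonneg
      intro w _
      by_cases h : w ≠ z
      · simp [h, hnn]
      · simp [h]
    have h1 := (Finset.sum_eq_zero_iff_of_nonneg hnn1).1 hrep y' (Finset.mem_univ y')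
    have hnn2 : ∀ y ∈ (Finset.univ : Finset A),
        (0:ℝ) ≤ (if y ≠ y' then μ (y', y, true, false) else 0) := by
      intro w _
      by_cases h : w ≠ y'
      · simp [h, hnn]
      · simp [h]
    have h2 := (Finset.sum_eq_zero_iff_of_nonneg hnn2).1 h1 y (Finset.mem_univ y)
    simpa [hne] using h2
  -- the per-block entropy bound (blocks other than (true,false))
  have hblock : ∀ a b : Bool,
      (∑ y' : A, ∑ y : A, μ (y', y, a, b) *
        Real.log ((∑ z : A, μ (y', z, a, b)) / μ (y', y, a, b)))
        ≤ 1 / 4 * Real.log m := by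
    intro a b
    have h1 : ∀ y' : A,
        ∑ y : A, μ (y', y, a, b) *
          Real.log ((∑ z : A, μ (y', z, a, b)) / μ (y', y, a, b))
          ≤ (∑ z : A, μ (y', z, a, b)) * Real.log m := by
      intro y'
      have := log_block (fun y => μ (y', y, a, b)) (fun y => hnn _)
      rwa [hcard] at this
    calc (∑ y' : A, ∑ y : A, μ (y', y, a, b) *
            Real.log ((∑ z : A, μ (y', z, a, b)) / μ (y', y, a, b)))
        ≤ ∑ y' : A, (∑ z : A, μ (y', z, a, b)) * Real.log m :=
          Finset.sum_le_sum fun y' _ => h1 y'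
      _ = (∑ y' : A, ∑ z : A, μ (y', z, a, b)) * Real.log m := by
          rw [Finset.sum_mul]
      _ = 1 / 4 * Real.log m := by rw [hunif a b]
  -- the (true,false) block contributes zero entropy
  have htf : (∑ y' : A, ∑ y : A, μ (y', y, true, false) *
      Real.log ((∑ z : A, μ (y', z, true, false)) / μ (y', y, true, false))) = 0 := by
    apply Finset.sum_eq_zero
    intro y' _
    have hSeq : (∑ z : A, μ (y', z, true, false)) = μ (y', y', true, false) := by
      rw [Finset.sum_eq_single y']
      · intro z _ hz
        exact hzero y' z hz
      · intro h
        exact absurd (Finset.mem_univ y') h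
    apply Finset.sum_eq_zero
    intro y _
    by_cases hy : y = y'
    · subst hy
      rw [hSeq]
      by_cases h0 : μ (y, y, true, false) = 0
      · rw [h0]; ring
      · rw [div_self h0, Real.log_one, mul_zero]
    · rw [hzero y' y hy]; ring
  -- expand the big sum into the four blocks
  have hexp : (∑ t : A × A × Bool × Bool,
        μ t * Real.log ((∑ y : A, μ (t.1, y, t.2.2.1, t.2.2.2)) / μ t))
      = (∑ y' : A, ∑ y : A, μ (y', y, true, true) *
          Real.log ((∑ z : A, μ (y', z, true, true)) / μ (y', y, true, true)))
        + (∑ y' : A, ∑ y : A, μ (y', y, true, false) *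
          Real.log ((∑ z : A, μ (y', z, true, false)) / μ (y', y, true, false)))
        + (∑ y' : A, ∑ y : A, μ (y', y, false, true) *
          Real.log ((∑ z : A, μ (y', z, false, true)) / μ (y', y, false, true)))
        + (∑ y' : A, ∑ y : A, μ (y', y, false, false) *
          Real.log ((∑ z : A, μ (y', z, false, false)) / μ (y', y, false, false))) := by
    simp only [Fintype.sum_prod_type, Fintype.sum_bool, Finset.sum_add_distrib]
    ring
  -- key inequality in natural logarithm
  have key : (∑ t : A × A × Bool × Bool,
        μ t * Real.log ((∑ y : A, μ (t.1, y, t.2.2.1, t.2.2.2)) / μ t))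
      ≤ 3 / 4 * Real.log m := by
    rw [hexp, htf]
    have h1 := hblock true true
    have h2 := hblock false true
    have h3 := hblock false false
    linarith
  -- convert from logb back and forth
  have hpt : ∀ t : A × A × Bool × Bool,
      μ t * Real.logb 2 (μ t / ∑ y : A, μ (t.1, y, t.2.2.1, t.2.2.2))
        = -(μ t * Real.logb 2 ((∑ y : A, μ (t.1, y, t.2.2.1, t.2.2.2)) / μ t)) := by
    intro t
    rw [show μ t / (∑ y : A, μ (t.1, y, t.2.2.1, t.2.2.2))
        = ((∑ y : A, μ (t.1, y, t.2.2.1, t.2.2.2)) / μ t)⁻¹ from (inv_div _ _).symm,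
      Real.logb_inv]
    ring
  rw [Finset.sum_congr rfl fun t _ => hpt t]
  rw [Finset.sum_neg_distrib, neg_neg]
  have heq : (∑ t : A × A × Bool × Bool,
      μ t * Real.logb 2 ((∑ y : A, μ (t.1, y, t.2.2.1, t.2.2.2)) / μ t))
      = (∑ t : A × A × Bool × Bool,
          μ t * Real.log ((∑ y : A, μ (t.1, y, t.2.2.1, t.2.2.2)) / μ t)) / Real.log 2 := by
    rw [Finset.sum_div]
    refine Finset.sum_congr rfl fun t _ => ?_
    rw [Real.logb]
    ring
  rw [heq, show (3:ℝ) / 4 * Real.logb 2 m = (3 / 4 * Real.log m) / Real.log 2 by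
    rw [Real.logb]; ring]
  gcongr
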